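/- arXiv:2410.14783 — 3 statements merged into one kernel-verified Lean document; each statement's English description precedes it below -/
import Mathlib

section
/- Let d, d', r be positive integers with r ≤ min(d, d'), let ε > 0, and set N₁ = ⌊(1 + 4/ε)^{d·r}⌋ and N₂ = ⌊(1 + 4/ε)^{d'·r}⌋. Then there exist matrices U_1, …, U_{N₁} ∈ ℝ^{d×r} and V_1, …, V_{N₂} ∈ ℝ^{d'×r} with ‖U_j‖₂ ≤ 1 and ‖V_{j'}‖₂ ≤ 1 for all j, j', such that for every M ∈ ℝ^{d×d'} with ‖M‖₂ ≤ 1 and rank(M) ≤ r there exist indices j ≤ N₁ and j' ≤ N₂ with ‖M − U_j V_{j'}ᵀ‖₂ ≤ ε. (Lemma B.1(ii) of the paper: an ε-net for the set of low-rank matrices with bounded spectral norm.) -/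
open scoped Matrix Matrix.Norms.L2Operator

open Metric MeasureTheory Module
open scoped ENNReal

open Metric MeasureTheory Module
open scoped ENNReal

lemma sep_card_bound {E : Type*} [NormedAddCommGroup E] [NormedSpace ℝ E]
    [FiniteDimensional ℝ E] [Nontrivial E] {δ : ℝ} (hδ : 0 < δ)
    (s : Finset E) (hball : ∀ x ∈ s, ‖x‖ ≤ 1)
    (hsep : ∀ x ∈ s, ∀ y ∈ s, x ≠ y → δ ≤ dist x y) :
    (s.card : ℝ) ≤ (1 + 2 / δ) ^ (finrank ℝ E) := by
  borelize E
  set n := finrank ℝ E with hn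
  set μ := (Module.finBasis ℝ E).addHaar with hμ
  have hd2 : (0:ℝ) < δ / 2 := by linarith
  have hdisj : ∀ x ∈ s, ∀ y ∈ s, x ≠ y → Disjoint (ball x (δ/2)) (ball y (δ/2)) := by
    intro x hx y hy hxy
    exact ball_disjoint_ball (by linarith [hsep x hx y hy hxy])
  have hsum : μ (⋃ x ∈ s, ball x (δ/2)) = ∑ x ∈ s, μ (ball x (δ/2)) := by
    apply measure_biUnion_finset
    · intro x hx y hy hxy
      exact hdisj x hx y hy hxy
    · intro x _; exact measurableSet_ball
  have hball' : ∀ x ∈ s, μ (ball x (δ/2)) = ENNReal.ofReal ((δ/2) ^ n) * μ (ball 0 1) := by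
    intro x _
    exact Measure.addHaar_ball μ x hd2.le
  have hsub : (⋃ x ∈ s, ball x (δ/2)) ⊆ ball (0:E) (1 + δ/2) := by
    intro z hz
    simp only [Set.mem_iUnion] at hz
    obtain ⟨x, hx, hzx⟩ := hz
    rw [mem_ball] at hzx ⊢
    have := hball x hx
    calc dist z 0 ≤ dist z x + dist x 0 := dist_triangle _ _ _
      _ < δ/2 + 1 := by
          rw [dist_zero_right] at *
          linarith
      _ = 1 + δ/2 := by ring
  have hle : (s.card : ℝ≥0∞) * ENNReal.ofReal ((δ/2) ^ n) * μ (ball 0 1)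
      ≤ ENNReal.ofReal ((1 + δ/2) ^ n) * μ (ball 0 1) := by
    calc (s.card : ℝ≥0∞) * ENNReal.ofReal ((δ/2) ^ n) * μ (ball 0 1)
        = ∑ x ∈ s, μ (ball x (δ/2)) := by
          rw [Finset.sum_congr rfl hball', Finset.sum_const, nsmul_eq_mul, mul_assoc]
      _ = μ (⋃ x ∈ s, ball x (δ/2)) := hsum.symm
      _ ≤ μ (ball (0:E) (1 + δ/2)) := measure_mono hsub
      _ = ENNReal.ofReal ((1 + δ/2) ^ n) * μ (ball 0 1) :=
          Measure.addHaar_ball μ 0 (by linarith : (0:ℝ) ≤ 1 + δ/2)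
  have hB0 : μ (ball (0:E) 1) ≠ 0 := (measure_ball_pos μ 0 one_pos).ne'
  have hBtop : μ (ball (0:E) 1) ≠ ⊤ := measure_ball_lt_top.ne
  have hle2 : (s.card : ℝ≥0∞) * ENNReal.ofReal ((δ/2) ^ n)
      ≤ ENNReal.ofReal ((1 + δ/2) ^ n) :=
    (ENNReal.mul_le_mul_iff_left hB0 hBtop).mp hle
  have hle3 : (s.card : ℝ) * (δ/2) ^ n ≤ (1 + δ/2) ^ n := by
    have : ENNReal.ofReal ((s.card : ℝ) * (δ/2) ^ n) ≤ ENNReal.ofReal ((1 + δ/2) ^ n) := by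
      rwa [ENNReal.ofReal_mul (by positivity), ENNReal.ofReal_natCast]
    exact (ENNReal.ofReal_le_ofReal_iff (by positivity)).mp this
  have hpow : (0:ℝ) < (δ/2) ^ n := by positivity
  rw [← le_div_iff₀ hpow] at hle3
  calc (s.card : ℝ) ≤ (1 + δ/2) ^ n / (δ/2) ^ n := hle3
    _ = ((1 + δ/2) / (δ/2)) ^ n := (div_pow _ _ _).symm
    _ = (1 + 2/δ) ^ n := by
        congr 1
        rw [div_eq_iff (ne_of_gt hd2)]
        field_simp
        ring

lemma exists_net {E : Type*} [NormedAddCommGroup E] [NormedSpace ℝ E]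
    [FiniteDimensional ℝ E] [Nontrivial E] {δ : ℝ} (hδ : 0 < δ) :
    ∃ s : Finset E, (s.card : ℝ) ≤ (1 + 2 / δ) ^ (finrank ℝ E) ∧
      (∀ x ∈ s, ‖x‖ ≤ 1) ∧ ∀ x : E, ‖x‖ ≤ 1 → ∃ y ∈ s, dist x y ≤ δ := by
  classical
  set C := ⌊(1 + 2 / δ) ^ (finrank ℝ E)⌋₊ with hC
  set P : ℕ → Prop := fun m => ∃ s : Finset E,
    (∀ x ∈ s, ‖x‖ ≤ 1) ∧ (∀ x ∈ s, ∀ y ∈ s, x ≠ y → δ ≤ dist x y) ∧ s.card = m with hP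
  have hcard : ∀ s : Finset E, (∀ x ∈ s, ‖x‖ ≤ 1) →
      (∀ x ∈ s, ∀ y ∈ s, x ≠ y → δ ≤ dist x y) → s.card ≤ C := by
    intro s h1 h2
    exact Nat.le_floor (sep_card_bound hδ s h1 h2)
  have hP0 : P 0 := ⟨∅, by simp, by simp, rfl⟩
  set N := Nat.findGreatest P C with hN
  obtain ⟨s, hs1, hs2, hs3⟩ : P N := Nat.findGreatest_spec (Nat.zero_le C) hP0
  refine ⟨s, ?_, hs1, ?_⟩
  · calc (s.card : ℝ) ≤ (C : ℝ) := by exact_mod_cast hcard s hs1 hs2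
      _ ≤ (1 + 2 / δ) ^ (finrank ℝ E) := Nat.floor_le (by positivity)
  · intro x hx
    by_contra hcov
    push_neg at hcov
    have hxs : x ∉ s := by
      intro hxs
      have := hcov x hxs
      rw [dist_self] at this
      linarith
    set s' : Finset E := insert x s with hs'
    have h1' : ∀ z ∈ s', ‖z‖ ≤ 1 := by
      intro z hz
      rcases Finset.mem_insert.mp hz with rfl | hz
      · exact hx
      · exact hs1 z hz
    have h2' : ∀ z ∈ s', ∀ y ∈ s', z ≠ y → δ ≤ dist z y := by
      intro z hz y hy hzy
      rcases Finset.mem_insert.mp hz with rfl | hz2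
      · rcases Finset.mem_insert.mp hy with rfl | hy2
        · exact absurd rfl hzy
        · exact (hcov y hy2).le
      · rcases Finset.mem_insert.mp hy with rfl | hy2
        · rw [dist_comm]; exact (hcov z hz2).le
        · exact hs2 z hz2 y hy2 hzy
    have hcard' : s'.card = N + 1 := by rw [Finset.card_insert_of_notMem hxs, hs3]
    have hPN1 : P (N + 1) := ⟨s', h1', h2', hcard'⟩
    have hle : N + 1 ≤ C := hcard' ▸ hcard s' h1' h2'
    exact Nat.findGreatest_is_greatest (Nat.lt_succ_self N) hle hPN1

open scoped Matrix Matrix.Norms.L2Operator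
open Module

lemma norm_transpose_l2 {m n : Type*} [Fintype m] [Fintype n] [DecidableEq m] [DecidableEq n]
    (A : Matrix m n ℝ) : ‖Aᵀ‖ = ‖A‖ := by
  rw [← Matrix.conjTranspose_eq_transpose_of_trivial, Matrix.l2_opNorm_conjTranspose]


lemma euclid_sum_apply {ι κ : Type*} [Fintype ι] (f : ι → EuclideanSpace ℝ κ) (a : κ) :
    (∑ i, f i) a = ∑ i, f i a := by
  change (WithLp.linearEquiv 2 ℝ (κ → ℝ) (∑ i, f i)) a = _
  rw [map_sum, Finset.sum_apply]
  rfl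

lemma factor {d d' r : ℕ} (hrd : r ≤ d) (M : Matrix (Fin d) (Fin d') ℝ)
    (hM : ‖M‖ ≤ 1) (hrank : M.rank ≤ r) :
    ∃ (A : Matrix (Fin d) (Fin r) ℝ) (B : Matrix (Fin d') (Fin r) ℝ),
      ‖A‖ ≤ 1 ∧ ‖B‖ ≤ 1 ∧ M = A * Bᵀ := by
  classical
  set e : (Fin d → ℝ) ≃ₗ[ℝ] EuclideanSpace ℝ (Fin d) :=
    (WithLp.linearEquiv 2 ℝ (Fin d → ℝ)).symm with he
  set W : Submodule ℝ (EuclideanSpace ℝ (Fin d)) :=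
    (LinearMap.range M.mulVecLin).map (e : (Fin d → ℝ) →ₗ[ℝ] EuclideanSpace ℝ (Fin d)) with hW
  have hfr : finrank ℝ W = M.rank := by
    rw [Matrix.rank]
    exact LinearEquiv.finrank_map_eq e _
  have hk : finrank ℝ W ≤ r := hfr ▸ hrank
  set b := stdOrthonormalBasis ℝ W with hb
  set u : Fin r → EuclideanSpace ℝ (Fin d) :=
    fun i => if h : (i : ℕ) < finrank ℝ W then (b ⟨i, h⟩ : EuclideanSpace ℝ (Fin d)) else 0
    with hu
  -- inner products of the `u` family
  have hbo : Orthonormal ℝ (fun p : Fin (finrank ℝ W) => (b p : EuclideanSpace ℝ (Fin d))) := by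
    rw [orthonormal_iff_ite]
    intro p q
    have := orthonormal_iff_ite.mp b.orthonormal p q
    rwa [Submodule.coe_inner] at this
  -- the key projection property
  have hproj : ∀ w : EuclideanSpace ℝ (Fin d), w ∈ W →
      ∑ i : Fin r, (inner ℝ (u i) w : ℝ) • u i = w := by
    intro w hw
    have hsum := b.sum_repr ⟨w, hw⟩
    have hco : ∑ p, (inner ℝ ((b p : EuclideanSpace ℝ (Fin d))) w : ℝ) • (b p : EuclideanSpace ℝ (Fin d)) = w := by
      have := congrArg (Submodule.subtype W) hsum
      simpa [map_sum, Submodule.coe_smul, b.repr_apply_apply, Submodule.coe_inner] using this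
    calc ∑ i : Fin r, (inner ℝ (u i) w : ℝ) • u i
        = ∑ i ∈ Finset.univ.map (Fin.castLEEmb hk), (inner ℝ (u i) w : ℝ) • u i := by
          symm
          apply Finset.sum_subset (Finset.subset_univ _)
          intro i _ hi
          have hnot : ¬ ((i : ℕ) < finrank ℝ W) := by
            intro h
            apply hi
            simp only [Finset.mem_map, Finset.mem_univ, true_and]
            exact ⟨⟨i, h⟩, by ext; simp⟩
          simp [hu, hnot]
      _ = ∑ p : Fin (finrank ℝ W), (inner ℝ (u (Fin.castLEEmb hk p)) w : ℝ) • u (Fin.castLEEmb hk p) :=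
          Finset.sum_map _ _ _
      _ = ∑ p, (inner ℝ ((b p : EuclideanSpace ℝ (Fin d))) w : ℝ) • (b p : EuclideanSpace ℝ (Fin d)) := by
          apply Finset.sum_congr rfl
          intro p _
          have hup : u (Fin.castLEEmb hk p) = (b p : EuclideanSpace ℝ (Fin d)) := by
            simp [hu, p.isLt]
          rw [hup]
      _ = w := hco
  set U : Matrix (Fin d) (Fin r) ℝ := Matrix.of (fun a i => u i a) with hUdef
  have hUa : ∀ a i, U a i = u i a := fun a i => rfl
  -- norm bound for U
  have hUnorm : ‖U‖ ≤ 1 := by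
    rw [Matrix.l2_opNorm_def]
    apply ContinuousLinearMap.opNorm_le_bound _ zero_le_one
    intro x
    rw [one_mul]
    have hxv : (Matrix.toEuclideanLin U) x = ∑ i : Fin r, x i • u i := by
      ext a
      rw [euclid_sum_apply]
      have h1 : ((Matrix.toEuclideanLin U) x) a = ∑ i, U a i * x i := rfl
      rw [h1]
      apply Finset.sum_congr rfl
      intro i _
      simp only [PiLp.smul_apply, smul_eq_mul, hUa]
      ring
    have hz : (∑ i : Fin r, x i • u i) =
        ∑ p : Fin (finrank ℝ W), x ((Fin.castLEEmb hk) p) • (b p : EuclideanSpace ℝ (Fin d)) := by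
      calc ∑ i : Fin r, x i • u i
          = ∑ i ∈ Finset.univ.map (Fin.castLEEmb hk), x i • u i := by
            symm
            apply Finset.sum_subset (Finset.subset_univ _)
            intro i _ hi
            have hnot : ¬ ((i : ℕ) < finrank ℝ W) := by
              intro h
              apply hi
              simp only [Finset.mem_map, Finset.mem_univ, true_and]
              exact ⟨⟨i, h⟩, by ext; simp⟩
            simp [hu, hnot]
        _ = ∑ p : Fin (finrank ℝ W), x ((Fin.castLEEmb hk) p) • u ((Fin.castLEEmb hk) p) :=
            Finset.sum_map _ _ _
        _ = _ := by
            apply Finset.sum_congr rfl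
            intro p _
            have hup : u (Fin.castLEEmb hk p) = (b p : EuclideanSpace ℝ (Fin d)) := by
              simp [hu, p.isLt]
            rw [hup]
    show ‖(Matrix.toEuclideanLin U) x‖ ≤ ‖x‖
    rw [hxv, hz]
    have hnn1 : (0:ℝ) ≤ ‖∑ p : Fin (finrank ℝ W), x ((Fin.castLEEmb hk) p) • (b p : EuclideanSpace ℝ (Fin d))‖ := norm_nonneg _
    have hnn2 : (0:ℝ) ≤ ‖x‖ := norm_nonneg _
    rw [← pow_le_pow_iff_left₀ hnn1 hnn2 (two_ne_zero)]
    rw [← real_inner_self_eq_norm_sq, ← real_inner_self_eq_norm_sq]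
    rw [hbo.inner_sum]
    have hxx : (inner ℝ x x : ℝ) = ∑ i : Fin r, x i * x i := by
      rw [PiLp.inner_apply]
      simp [RCLike.inner_apply, sq]
    rw [hxx]
    simp only [starRingEnd_apply, star_trivial]
    rw [← Finset.sum_map Finset.univ (Fin.castLEEmb hk) (fun i => x i * x i)]
    apply Finset.sum_le_sum_of_subset_of_nonneg (Finset.subset_univ _)
    intro i _ _
    exact mul_self_nonneg _
  -- the factorization identity
  have hMU : U * (Uᵀ * M) = M := by
    ext a c
    have hw : (e (M *ᵥ Pi.single c 1)) ∈ W := by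
      rw [hW]
      exact Submodule.mem_map_of_mem ⟨Pi.single c 1, Matrix.mulVecLin_apply _ _⟩
    have hp := hproj (e (M *ᵥ Pi.single c 1)) hw
    have hpa := congrArg (fun v : EuclideanSpace ℝ (Fin d) => v a) hp
    simp only at hpa
    rw [euclid_sum_apply] at hpa
    have hea : ∀ a', (e (M *ᵥ Pi.single c 1)) a' = M a' c := by
      intro a'
      show (M *ᵥ Pi.single c 1) a' = M a' c
      rw [Matrix.mulVec_single]
      exact mul_one _
    have hinner : ∀ i, (inner ℝ (u i) (e (M *ᵥ Pi.single c 1)) : ℝ) =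
        ∑ a', u i a' * M a' c := by
      intro i
      rw [PiLp.inner_apply]
      apply Finset.sum_congr rfl
      intro a' _
      rw [RCLike.inner_apply, hea a']
      simp [mul_comm]
    rw [hea a] at hpa
    rw [Matrix.mul_apply]
    rw [← hpa]
    apply Finset.sum_congr rfl
    intro i _
    rw [Matrix.mul_apply, PiLp.smul_apply, smul_eq_mul, hinner i]
    simp only [Matrix.transpose_apply, hUa]
    rw [mul_comm]
  refine ⟨U, Mᵀ * U, hUnorm, ?_, ?_⟩
  · have h1 : ‖(Mᵀ * U)‖ = ‖(Mᵀ * U)ᵀ‖ := (norm_transpose_l2 _).symm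
    rw [h1, Matrix.transpose_mul, Matrix.transpose_transpose]
    calc ‖Uᵀ * M‖ ≤ ‖Uᵀ‖ * ‖M‖ := Matrix.l2_opNorm_mul _ _
      _ ≤ 1 * 1 := by
          apply mul_le_mul _ hM (norm_nonneg _) zero_le_one
          rw [norm_transpose_l2]
          exact hUnorm
      _ = 1 := mul_one 1
  · rw [Matrix.transpose_mul, Matrix.transpose_transpose, hMU]


/-- **Lemma B.1(ii)**: an `ε`-net for the set of `d × d'` real matrices of rank at most `r`
and spectral norm at most `1`, consisting of products `U_j V_{j'}ᵀ` with
`‖U_j‖₂ ≤ 1`, `‖V_{j'}‖₂ ≤ 1`, of cardinalities `N₁ = ⌊(1+4/ε)^{d r}⌋` and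
`N₂ = ⌊(1+4/ε)^{d' r}⌋`.  Here `‖·‖` is the `ℓ²→ℓ²` operator (spectral) norm. -/
theorem stmt_2 (d d' r : ℕ) (hr : 1 ≤ r) (hrd : r ≤ min d d') (ε : ℝ) (hε : 0 < ε) :
    ∃ (U : Fin ⌊(1 + 4 / ε) ^ (d * r)⌋₊ → Matrix (Fin d) (Fin r) ℝ)
      (V : Fin ⌊(1 + 4 / ε) ^ (d' * r)⌋₊ → Matrix (Fin d') (Fin r) ℝ),
      (∀ j, ‖U j‖ ≤ 1) ∧ (∀ j', ‖V j'‖ ≤ 1) ∧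
      ∀ M : Matrix (Fin d) (Fin d') ℝ, ‖M‖ ≤ 1 → M.rank ≤ r →
        ∃ j j', ‖M - U j * (V j')ᵀ‖ ≤ ε := by
    classical
  have hrd1 : r ≤ d := hrd.trans (min_le_left _ _)
  have hrd2 : r ≤ d' := hrd.trans (min_le_right _ _)
  have hd : 1 ≤ d := hr.trans hrd1
  have hd' : 1 ≤ d' := hr.trans hrd2
  have hδ : (0:ℝ) < ε / 2 := by linarith
  have h24 : (1:ℝ) + 2 / (ε/2) = 1 + 4 / ε := by
    congr 1
    rw [div_div_eq_mul_div]
    ring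
  -- finrank of matrix spaces
  have hfin1 : finrank ℝ (Matrix (Fin d) (Fin r) ℝ) = d * r := by
    rw [Module.finrank_matrix, finrank_self, mul_one, Fintype.card_fin, Fintype.card_fin]
  have hfin2 : finrank ℝ (Matrix (Fin d') (Fin r) ℝ) = d' * r := by
    rw [Module.finrank_matrix, finrank_self, mul_one, Fintype.card_fin, Fintype.card_fin]
  haveI : Nontrivial (Matrix (Fin d) (Fin r) ℝ) :=
    Module.nontrivial_of_finrank_pos (R := ℝ)
      (by rw [hfin1]; positivity)
  haveI : Nontrivial (Matrix (Fin d') (Fin r) ℝ) :=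
    Module.nontrivial_of_finrank_pos (R := ℝ)
      (by rw [hfin2]; positivity)
  obtain ⟨s₁, hs₁card, hs₁ball, hs₁cov⟩ :=
    exists_net (E := Matrix (Fin d) (Fin r) ℝ) hδ
  obtain ⟨s₂, hs₂card, hs₂ball, hs₂cov⟩ :=
    exists_net (E := Matrix (Fin d') (Fin r) ℝ) hδ
  rw [h24, hfin1] at hs₁card
  rw [h24, hfin2] at hs₂card
  have hN₁ : s₁.card ≤ ⌊(1 + 4 / ε) ^ (d * r)⌋₊ := Nat.le_floor hs₁card
  have hN₂ : s₂.card ≤ ⌊(1 + 4 / ε) ^ (d' * r)⌋₊ := Nat.le_floor hs₂card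
  set l₁ := s₁.toList with hl₁
  set l₂ := s₂.toList with hl₂
  refine ⟨fun j => l₁.getD j 0, fun j' => l₂.getD j' 0, ?_, ?_, ?_⟩
  · intro j
    show ‖l₁.getD (j : ℕ) 0‖ ≤ 1
    by_cases h : (j : ℕ) < l₁.length
    · rw [List.getD_eq_getElem l₁ 0 h]
      exact hs₁ball _ (Finset.mem_toList.mp (List.getElem_mem h))
    · rw [List.getD_eq_default l₁ 0 (not_lt.mp h)]
      simp
  · intro j'
    show ‖l₂.getD (j' : ℕ) 0‖ ≤ 1
    by_cases h : (j' : ℕ) < l₂.length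
    · rw [List.getD_eq_getElem l₂ 0 h]
      exact hs₂ball _ (Finset.mem_toList.mp (List.getElem_mem h))
    · rw [List.getD_eq_default l₂ 0 (not_lt.mp h)]
      simp
  · intro M hM hrank
    obtain ⟨A, B, hA, hB, hAB⟩ := factor hrd1 M hM hrank
    obtain ⟨y₁, hy₁mem, hy₁⟩ := hs₁cov A hA
    obtain ⟨y₂, hy₂mem, hy₂⟩ := hs₂cov B hB
    obtain ⟨i₁, hi₁, hgy₁⟩ := List.mem_iff_getElem.mp (Finset.mem_toList.mpr hy₁mem)
    obtain ⟨i₂, hi₂, hgy₂⟩ := List.mem_iff_getElem.mp (Finset.mem_toList.mpr hy₂mem)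
    have hi₁' : i₁ < ⌊(1 + 4 / ε) ^ (d * r)⌋₊ :=
      lt_of_lt_of_le (by simpa only [hl₁, Finset.length_toList] using hi₁) hN₁
    have hi₂' : i₂ < ⌊(1 + 4 / ε) ^ (d' * r)⌋₊ :=
      lt_of_lt_of_le (by simpa only [hl₂, Finset.length_toList] using hi₂) hN₂
    refine ⟨⟨i₁, hi₁'⟩, ⟨i₂, hi₂'⟩, ?_⟩
    show ‖M - l₁.getD i₁ 0 * (l₂.getD i₂ 0)ᵀ‖ ≤ ε
    have hU : l₁.getD i₁ 0 = y₁ := by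
      rw [List.getD_eq_getElem l₁ 0 hi₁]
      exact hgy₁
    have hV : l₂.getD i₂ 0 = y₂ := by
      rw [List.getD_eq_getElem l₂ 0 hi₂]
      exact hgy₂
    rw [hU, hV, hAB]
    have hsplit : A * Bᵀ - y₁ * y₂ᵀ = (A - y₁) * Bᵀ + y₁ * (B - y₂)ᵀ := by
      rw [Matrix.transpose_sub, Matrix.sub_mul, Matrix.mul_sub]
      abel
    rw [hsplit]
    have h1 : ‖(A - y₁) * Bᵀ‖ ≤ (ε/2) * 1 := by
      calc ‖(A - y₁) * Bᵀ‖ ≤ ‖A - y₁‖ * ‖Bᵀ‖ := Matrix.l2_opNorm_mul _ _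
        _ ≤ (ε/2) * 1 := by
            apply mul_le_mul _ _ (norm_nonneg _) hδ.le
            · rw [← dist_eq_norm]; exact hy₁
            · rw [norm_transpose_l2]; exact hB
    have h2 : ‖y₁ * (B - y₂)ᵀ‖ ≤ 1 * (ε/2) := by
      calc ‖y₁ * (B - y₂)ᵀ‖ ≤ ‖y₁‖ * ‖(B - y₂)ᵀ‖ := Matrix.l2_opNorm_mul _ _
        _ ≤ 1 * (ε/2) := by
            apply mul_le_mul (hs₁ball _ hy₁mem) _ (norm_nonneg _) zero_le_one
            rw [norm_transpose_l2, ← dist_eq_norm]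
            exact hy₂
    calc ‖(A - y₁) * Bᵀ + y₁ * (B - y₂)ᵀ‖ ≤ ‖(A - y₁) * Bᵀ‖ + ‖y₁ * (B - y₂)ᵀ‖ := norm_add_le _ _
      _ ≤ (ε/2) * 1 + 1 * (ε/2) := add_le_add h1 h2
      _ = ε := by ring
end

section
/- Let r ≤ min(d₁, d₂) with r ≥ 1, and let M, M̂ = M + Δ be d₁×d₂ real matrices. Suppose U ∈ ℝ^{d₁×r}, U⊥ ∈ ℝ^{d₁×(d₁−r)}, V ∈ ℝ^{d₂×r}, V⊥ ∈ ℝ^{d₂×(d₂−r)} are such that [U, U⊥] and [V, V⊥] are orthogonal matrices, and M = U A Vᵀ + U⊥ B V⊥ᵀ for some A ∈ ℝ^{r×r}, B ∈ ℝ^{(d₁−r)×(d₂−r)} with ‖A x‖ ≥ λ_r ‖x‖ for all x ∈ ℝ^r (i.e. every singular value of A is at least λ_r). Likewise suppose Û, Û⊥, V̂, V̂⊥ form orthogonal matrices [Û, Û⊥], [V̂, V̂⊥] and M̂ = Û Â V̂ᵀ + Û⊥ B̂ V̂⊥ᵀ with ‖Â x‖ ≥ ‖B̂‖₂ ‖x‖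 for all x ∈ ℝ^r. Write λ̂ = ‖B̂‖₂, ε₁ = ‖Uᵀ Δ V̂⊥‖₂, ε₂ = ‖Û⊥ᵀ Δ V‖₂, and assume λ_r > λ̂. Then ‖U⊥ᵀ Û‖₂ ≤ (λ̂ ε₁ + λ_r ε₂) / (λ_r² − λ̂²) ≤ max(ε₁, ε₂) / (λ_r − λ̂). (Lemma B.2 of the paper, an improvement of Wedin's sin Θ perturbation bound, stated for the spectral norm.) -/
open scoped Matrix Matrix.Norms.L2Operator

open scoped Matrix.Norms.L2Operator
set_option maxHeartbeats 1000000
open Matrix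

set_option linter.unusedSectionVars false

namespace WedinAux

variable {m n p : Type*} [Fintype m] [Fintype n] [Fintype p]
  [DecidableEq m] [DecidableEq n] [DecidableEq p]

lemma norm_sq_eq_dot (x : EuclideanSpace ℝ n) :
    ‖x‖ ^ 2 = (WithLp.equiv 2 _ x) ⬝ᵥ (WithLp.equiv 2 _ x) := by
  rw [← real_inner_self_eq_norm_sq]
  simp only [PiLp.inner_apply, dotProduct, RCLike.inner_apply, conj_trivial, WithLp.equiv_apply]

lemma app_mul (A : Matrix m n ℝ) (B : Matrix n p ℝ) (x : EuclideanSpace ℝ p) :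
    toEuclideanLin (A * B) x = toEuclideanLin A (toEuclideanLin B x) := by
  simp [toEuclideanLin_apply, Matrix.mulVec_mulVec]

lemma norm_le_bound (A : Matrix m n ℝ) (c : ℝ) (hc : 0 ≤ c)
    (h : ∀ x : EuclideanSpace ℝ n, ‖toEuclideanLin A x‖ ≤ c * ‖x‖) : ‖A‖ ≤ c := by
  rw [Matrix.l2_opNorm_def]
  exact ContinuousLinearMap.opNorm_le_bound _ hc h

lemma norm_app_le (A : Matrix m n ℝ) (x : EuclideanSpace ℝ n) :
    ‖toEuclideanLin A x‖ ≤ ‖A‖ * ‖x‖ :=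
  A.l2_opNorm_mulVec x

lemma dot_mulVec_self (W : Matrix m n ℝ) (x : n → ℝ) :
    (W *ᵥ x) ⬝ᵥ (W *ᵥ x) = ((Wᵀ * W) *ᵥ x) ⬝ᵥ x := by
  rw [Matrix.dotProduct_mulVec, ← Matrix.mulVec_transpose, Matrix.mulVec_mulVec]

lemma le_of_sq_le_sq {a b : ℝ} (hb : 0 ≤ b) (h : a ^ 2 ≤ b ^ 2) : a ≤ b := by
  nlinarith [sq_nonneg (a - b), sq_nonneg (a + b)]

lemma norm_app_sq (A : Matrix m n ℝ) (x : EuclideanSpace ℝ n) :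
    ‖toEuclideanLin A x‖ ^ 2 = ((Aᵀ * A) *ᵥ (WithLp.equiv 2 _ x)) ⬝ᵥ (WithLp.equiv 2 _ x) := by
  rw [norm_sq_eq_dot, ← dot_mulVec_self]
  rfl

/-- Pythagoras for a complete orthogonal pair. -/
lemma pyth (U : Matrix m n ℝ) (Up : Matrix m p ℝ) (h : U * Uᵀ + Up * Upᵀ = 1)
    (y : EuclideanSpace ℝ m) :
    ‖toEuclideanLin Uᵀ y‖ ^ 2 + ‖toEuclideanLin Upᵀ y‖ ^ 2 = ‖y‖ ^ 2 := by
  rw [norm_app_sq, norm_app_sq, norm_sq_eq_dot, Matrix.transpose_transpose,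
    Matrix.transpose_transpose, ← add_dotProduct, ← Matrix.add_mulVec, h,
    Matrix.one_mulVec]

/-- Isometry: `WᵀW = 1` implies `‖Wx‖ = ‖x‖`. -/
lemma isometry_of (W : Matrix m n ℝ) (hW : Wᵀ * W = 1) (x : EuclideanSpace ℝ n) :
    ‖toEuclideanLin W x‖ = ‖x‖ := by
  have h2 : ‖toEuclideanLin W x‖ ^ 2 = ‖x‖ ^ 2 := by
    rw [norm_app_sq, hW, Matrix.one_mulVec, norm_sq_eq_dot]
  have := le_of_sq_le_sq (norm_nonneg x) h2.le
  have := le_of_sq_le_sq (norm_nonneg (toEuclideanLin W x)) h2.ge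
  linarith

lemma mul_lower (A : Matrix m n ℝ) (N : Matrix n p ℝ) (c : ℝ)
    (h : ∀ x : EuclideanSpace ℝ n, c * ‖x‖ ≤ ‖toEuclideanLin A x‖) :
    c * ‖N‖ ≤ ‖A * N‖ := by
  rcases le_or_gt c 0 with hc | hc
  · exact le_trans (mul_nonpos_of_nonpos_of_nonneg hc (norm_nonneg _)) (norm_nonneg _)
  · rw [mul_comm, ← le_div_iff₀ hc]
    refine norm_le_bound _ _ (div_nonneg (norm_nonneg _) hc.le) fun x => ?_
    rw [div_mul_eq_mul_div, le_div_iff₀ hc, mul_comm _ c]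
    calc c * ‖toEuclideanLin N x‖ ≤ ‖toEuclideanLin A (toEuclideanLin N x)‖ := h _
      _ = ‖toEuclideanLin (A * N) x‖ := by rw [app_mul]
      _ ≤ ‖A * N‖ * ‖x‖ := norm_app_le _ _

lemma norm_transpose (A : Matrix m n ℝ) : ‖Aᵀ‖ = ‖A‖ := by
  rw [← Matrix.l2_opNorm_conjTranspose A]
  congr 1

lemma transpose_lower (A : Matrix n n ℝ) (c : ℝ) (hc : 0 < c)
    (h : ∀ x : EuclideanSpace ℝ n, c * ‖x‖ ≤ ‖toEuclideanLin A x‖) :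
    ∀ y : EuclideanSpace ℝ n, c * ‖y‖ ≤ ‖toEuclideanLin Aᵀ y‖ := by
  have hinj : Function.Injective (toEuclideanLin A) := by
    rw [← LinearMap.ker_eq_bot, LinearMap.ker_eq_bot']
    intro x hx
    have hle := h x
    rw [hx, norm_zero] at hle
    have hx0 : ‖x‖ ≤ 0 := by nlinarith
    exact norm_le_zero_iff.mp hx0
  have hsurj : Function.Surjective (toEuclideanLin A) :=
    (LinearMap.injective_iff_surjective).mp hinj
  intro y
  obtain ⟨x, hx⟩ := hsurj y
  rcases eq_or_ne y 0 with rfl | hy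
  · simp
  have hxn : c * ‖x‖ ≤ ‖y‖ := by rw [← hx]; exact h x
  have key : ‖y‖ ^ 2 ≤ ‖toEuclideanLin Aᵀ y‖ * ‖x‖ := by
    have h1 : (‖y‖ : ℝ) ^ 2 = (WithLp.equiv 2 _ y) ⬝ᵥ (A *ᵥ (WithLp.equiv 2 _ x)) := by
      rw [norm_sq_eq_dot]
      congr 1
      rw [← hx]; rfl
    have h2 : (WithLp.equiv 2 _ y) ⬝ᵥ (A *ᵥ (WithLp.equiv 2 _ x))
        = (WithLp.equiv 2 _ (toEuclideanLin Aᵀ y)) ⬝ᵥ (WithLp.equiv 2 _ x) := by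
      rw [Matrix.dotProduct_mulVec]
      congr 1
      rw [← Matrix.mulVec_transpose]
      rfl
    have h3 : (WithLp.equiv 2 _ (toEuclideanLin Aᵀ y)) ⬝ᵥ (WithLp.equiv 2 _ x)
        = inner (toEuclideanLin Aᵀ y) x (𝕜 := ℝ) := by
      simp [PiLp.inner_apply, dotProduct, mul_comm]
    rw [h1, h2, h3]
    exact real_inner_le_norm _ _
  have hyp : 0 < ‖y‖ := norm_pos_iff.mpr hy
  nlinarith [norm_nonneg (toEuclideanLin Aᵀ y),
    mul_le_mul_of_nonneg_left hxn (norm_nonneg (toEuclideanLin Aᵀ y)),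
    mul_le_mul_of_nonneg_left key hc.le]

lemma mul_lower_right (N : Matrix m n ℝ) (A : Matrix n n ℝ) (c : ℝ) (hc : 0 < c)
    (h : ∀ x : EuclideanSpace ℝ n, c * ‖x‖ ≤ ‖toEuclideanLin A x‖) :
    c * ‖N‖ ≤ ‖N * A‖ := by
  have h1 : ‖N * A‖ = ‖Aᵀ * Nᵀ‖ := by
    rw [← Matrix.transpose_mul, norm_transpose]
  rw [h1, ← norm_transpose N]
  exact mul_lower _ _ _ (transpose_lower A c hc h)

/-- sin Θ symmetry, one direction. -/
lemma sin_theta (U : Matrix m n ℝ) (Up : Matrix m p ℝ) (Uh : Matrix m n ℝ)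
    (Uph : Matrix m p ℝ) (hU : Uᵀ * U = 1) (hUc : U * Uᵀ + Up * Upᵀ = 1)
    (hUh : Uhᵀ * Uh = 1) (hUhc : Uh * Uhᵀ + Uph * Uphᵀ = 1) :
    ‖Upᵀ * Uh‖ ≤ ‖Uphᵀ * U‖ := by
  set t : ℝ := ‖Uphᵀ * U‖ with ht
  have ht0 : 0 ≤ t := norm_nonneg _
  rcases le_or_gt 1 t with h1t | h1t
  · refine le_trans (norm_le_bound _ 1 zero_le_one fun v => ?_) h1t
    rw [app_mul, one_mul]
    have hp2 := pyth U Up hUc ((toEuclideanLin Uh) v)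
    have hiso2 : ‖(toEuclideanLin Uh) v‖ ^ 2 = ‖v‖ ^ 2 := by rw [isometry_of Uh hUh v]
    refine le_of_sq_le_sq (norm_nonneg _) ?_
    nlinarith [sq_nonneg ‖toEuclideanLin Uᵀ ((toEuclideanLin Uh) v)‖]
  · set lam : ℝ := Real.sqrt (1 - t ^ 2) with hlam
    have hlam2 : lam ^ 2 = 1 - t ^ 2 := Real.sq_sqrt (by nlinarith)
    have hlampos : 0 < lam := Real.sqrt_pos.mpr (by nlinarith)
    have claim1 : ∀ w : EuclideanSpace ℝ n, lam * ‖w‖ ≤ ‖toEuclideanLin (Uhᵀ * U) w‖ := by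
      intro w
      have hp := pyth Uh Uph hUhc ((toEuclideanLin U) w)
      have hiso2 : ‖(toEuclideanLin U) w‖ ^ 2 = ‖w‖ ^ 2 := by rw [isometry_of U hU w]
      have hup : ‖toEuclideanLin Uphᵀ ((toEuclideanLin U) w)‖ ≤ t * ‖w‖ := by
        rw [← app_mul]; exact norm_app_le _ _
      have hup2 : ‖toEuclideanLin Uphᵀ ((toEuclideanLin U) w)‖ ^ 2 ≤ (t * ‖w‖) ^ 2 :=
        pow_le_pow_left₀ (norm_nonneg _) hup 2
      refine le_of_sq_le_sq (norm_nonneg _) ?_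
      rw [app_mul]
      have e1 : (t * ‖w‖) ^ 2 = t ^ 2 * ‖w‖ ^ 2 := by ring
      have e2 : (lam * ‖w‖) ^ 2 = (1 - t ^ 2) * ‖w‖ ^ 2 := by rw [mul_pow, hlam2]
      linarith
    have claim2 : ∀ v : EuclideanSpace ℝ n, lam * ‖v‖ ≤ ‖toEuclideanLin (Uᵀ * Uh) v‖ := by
      have := transpose_lower (Uhᵀ * U) lam hlampos claim1
      simpa [Matrix.transpose_mul] using this
    refine norm_le_bound _ t ht0 fun v => ?_
    have hp2 := pyth U Up hUc ((toEuclideanLin Uh) v)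
    have hiso2 : ‖(toEuclideanLin Uh) v‖ ^ 2 = ‖v‖ ^ 2 := by rw [isometry_of Uh hUh v]
    have hlow := claim2 v
    rw [app_mul] at hlow
    have hlowsq : (lam * ‖v‖) ^ 2 ≤ ‖toEuclideanLin Uᵀ ((toEuclideanLin Uh) v)‖ ^ 2 :=
      pow_le_pow_left₀ (mul_nonneg hlampos.le (norm_nonneg v)) hlow 2
    refine le_of_sq_le_sq (mul_nonneg ht0 (norm_nonneg _)) ?_
    rw [app_mul]
    have e1 : (t * ‖v‖) ^ 2 = t ^ 2 * ‖v‖ ^ 2 := by ring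
    have e2 : (lam * ‖v‖) ^ 2 = (1 - t ^ 2) * ‖v‖ ^ 2 := by rw [mul_pow, hlam2]
    linarith

end WedinAux

open scoped Matrix.Norms.L2Operator
set_option maxHeartbeats 1000000


open WedinAux in
/-- **Lemma B.2** (improved Wedin `sin Θ` perturbation bound, spectral norm version).
`M = U A Vᵀ + U⊥ B V⊥ᵀ` is a singular-value-type block decomposition of `M` where
`[U, U⊥]` and `[V, V⊥]` are orthogonal (expressed by the orthonormality, orthogonality and
completeness relations below), every singular value of `A` is at least `λr`
(expressed as `λr ‖x‖ ≤ ‖A x‖` for all `x`), and similarly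
`M̂ = M + Δ = Û Â V̂ᵀ + Û⊥ B̂ V̂⊥ᵀ` with every singular value of `Â` at least
`λ̂ = ‖B̂‖₂`.  With `ε₁ = ‖Uᵀ Δ V̂⊥‖₂`, `ε₂ = ‖Û⊥ᵀ Δ V‖₂` and `λr > λ̂`,
`‖U⊥ᵀ Û‖₂ ≤ (λ̂ ε₁ + λr ε₂)/(λr² − λ̂²) ≤ max(ε₁, ε₂)/(λr − λ̂)`. -/
theorem stmt_4 (d₁ d₂ r : ℕ) (hr : 1 ≤ r) (hr₁ : r ≤ d₁) (hr₂ : r ≤ d₂)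
    (M Δ : Matrix (Fin d₁) (Fin d₂) ℝ)
    (U : Matrix (Fin d₁) (Fin r) ℝ) (Up : Matrix (Fin d₁) (Fin (d₁ - r)) ℝ)
    (V : Matrix (Fin d₂) (Fin r) ℝ) (Vp : Matrix (Fin d₂) (Fin (d₂ - r)) ℝ)
    (hU : Uᵀ * U = 1) (hUp : Upᵀ * Up = 1) (hUUp : Uᵀ * Up = 0)
    (hUcomplete : U * Uᵀ + Up * Upᵀ = 1)
    (hV : Vᵀ * V = 1) (hVp : Vpᵀ * Vp = 1) (hVVp : Vᵀ * Vp = 0)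
    (hVcomplete : V * Vᵀ + Vp * Vpᵀ = 1)
    (A : Matrix (Fin r) (Fin r) ℝ) (B : Matrix (Fin (d₁ - r)) (Fin (d₂ - r)) ℝ)
    (lr : ℝ)
    (hM : M = U * A * Vᵀ + Up * B * Vpᵀ)
    (hA : ∀ x : EuclideanSpace ℝ (Fin r), lr * ‖x‖ ≤ ‖Matrix.toEuclideanLin A x‖)
    (Uh : Matrix (Fin d₁) (Fin r) ℝ) (Uph : Matrix (Fin d₁) (Fin (d₁ - r)) ℝ)
    (Vh : Matrix (Fin d₂) (Fin r) ℝ) (Vph : Matrix (Fin d₂) (Fin (d₂ - r)) ℝ)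
    (hUh : Uhᵀ * Uh = 1) (hUph : Uphᵀ * Uph = 1) (hUUph : Uhᵀ * Uph = 0)
    (hUhcomplete : Uh * Uhᵀ + Uph * Uphᵀ = 1)
    (hVh : Vhᵀ * Vh = 1) (hVph : Vphᵀ * Vph = 1) (hVVph : Vhᵀ * Vph = 0)
    (hVhcomplete : Vh * Vhᵀ + Vph * Vphᵀ = 1)
    (Ah : Matrix (Fin r) (Fin r) ℝ) (Bh : Matrix (Fin (d₁ - r)) (Fin (d₂ - r)) ℝ)
    (hMh : M + Δ = Uh * Ah * Vhᵀ + Uph * Bh * Vphᵀ)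
    (hAh : ∀ x : EuclideanSpace ℝ (Fin r), ‖Bh‖ * ‖x‖ ≤ ‖Matrix.toEuclideanLin Ah x‖)
    (hgap : ‖Bh‖ < lr) :
    ‖Upᵀ * Uh‖ ≤ (‖Bh‖ * ‖Uᵀ * Δ * Vph‖ + lr * ‖Uphᵀ * Δ * V‖) / (lr ^ 2 - ‖Bh‖ ^ 2) ∧
    ‖Upᵀ * Uh‖ ≤ max ‖Uᵀ * Δ * Vph‖ ‖Uphᵀ * Δ * V‖ / (lr - ‖Bh‖) := by
  classical
  have hlh0 : (0:ℝ) ≤ ‖Bh‖ := norm_nonneg _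
  have hlr0 : 0 < lr := lt_of_le_of_lt hlh0 hgap
  -- contraction helper lemmas
  have hU' : ∀ {k : Type} (X : Matrix (Fin r) k ℝ), Uᵀ * (U * X) = X := fun X => by
    rw [← Matrix.mul_assoc, hU, Matrix.one_mul]
  have hUUp' : ∀ {k : Type} (X : Matrix (Fin (d₁ - r)) k ℝ), Uᵀ * (Up * X) = 0 := fun X => by
    rw [← Matrix.mul_assoc, hUUp, Matrix.zero_mul]
  have hUphUh : Uphᵀ * Uh = 0 := by
    have := congrArg Matrix.transpose hUUph
    simpa using this
  have hUphUh' : ∀ {k : Type} (X : Matrix (Fin r) k ℝ), Uphᵀ * (Uh * X) = 0 := fun X => by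
    rw [← Matrix.mul_assoc, hUphUh, Matrix.zero_mul]
  have hUph' : ∀ {k : Type} (X : Matrix (Fin (d₁ - r)) k ℝ), Uphᵀ * (Uph * X) = X := fun X => by
    rw [← Matrix.mul_assoc, hUph, Matrix.one_mul]
  -- identity 1 : A (Vᵀ V̂⊥) + Uᵀ Δ V̂⊥ = (Uᵀ Û⊥) B̂
  have k1a : Uᵀ * (M * Vph) = A * (Vᵀ * Vph) := by
    rw [hM]
    simp [Matrix.add_mul, Matrix.mul_add, Matrix.mul_assoc, hU', hUUp']
  have k1b : Uᵀ * ((M + Δ) * Vph) = Uᵀ * (Uph * Bh) := by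
    rw [hMh]
    simp [Matrix.add_mul, Matrix.mul_add, Matrix.mul_assoc, hVVph, hVph]
  have e1 : A * (Vᵀ * Vph) = Uᵀ * (Uph * Bh) - Uᵀ * (Δ * Vph) := by
    have h' : A * (Vᵀ * Vph) + Uᵀ * (Δ * Vph) = Uᵀ * (Uph * Bh) := by
      rw [← k1a, ← Matrix.mul_add, ← Matrix.add_mul]
      exact k1b
    linear_combination (norm := abel) h'
  -- identity 2 : (Û⊥ᵀ U) A + Û⊥ᵀ Δ V = B̂ (V̂⊥ᵀ V)
  have hVpV : Vpᵀ * V = 0 := by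
    have := congrArg Matrix.transpose hVVp
    simpa using this
  have k2a : Uphᵀ * (M * V) = Uphᵀ * (U * A) := by
    rw [hM]
    simp [Matrix.add_mul, Matrix.mul_add, Matrix.mul_assoc, hV, hVpV]
  have k2b : Uphᵀ * ((M + Δ) * V) = Bh * (Vphᵀ * V) := by
    rw [hMh]
    simp [Matrix.add_mul, Matrix.mul_add, Matrix.mul_assoc, hUphUh', hUph']
  have e2 : Uphᵀ * (U * A) = Bh * (Vphᵀ * V) - Uphᵀ * (Δ * V) := by
    have h' : Uphᵀ * (U * A) + Uphᵀ * (Δ * V) = Bh * (Vphᵀ * V) := by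
      rw [← k2a, ← Matrix.mul_add, ← Matrix.add_mul]
      exact k2b
    linear_combination (norm := abel) h'
  -- norms
  have hUUphT : ‖Uᵀ * Uph‖ = ‖Uphᵀ * U‖ := by
    rw [← WedinAux.norm_transpose (Uphᵀ * U)]
    simp
  have hVphVT : ‖Vphᵀ * V‖ = ‖Vᵀ * Vph‖ := by
    rw [← WedinAux.norm_transpose (Vᵀ * Vph)]
    simp
  have hassoc1 : ‖Uᵀ * (Δ * Vph)‖ = ‖Uᵀ * Δ * Vph‖ := by rw [← Matrix.mul_assoc]
  have hassoc2 : ‖Uphᵀ * (Δ * V)‖ = ‖Uphᵀ * Δ * V‖ := by rw [← Matrix.mul_assoc]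
  have n1 : lr * ‖Vᵀ * Vph‖ ≤ ‖Uphᵀ * U‖ * ‖Bh‖ + ‖Uᵀ * Δ * Vph‖ := by
    calc lr * ‖Vᵀ * Vph‖ ≤ ‖A * (Vᵀ * Vph)‖ := mul_lower A _ lr hA
      _ = ‖Uᵀ * (Uph * Bh) - Uᵀ * (Δ * Vph)‖ := by rw [e1]
      _ ≤ ‖Uᵀ * (Uph * Bh)‖ + ‖Uᵀ * (Δ * Vph)‖ := norm_sub_le _ _
      _ ≤ ‖Uphᵀ * U‖ * ‖Bh‖ + ‖Uᵀ * Δ * Vph‖ := by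
          rw [hassoc1, ← Matrix.mul_assoc, ← hUUphT]
          exact add_le_add_left (Matrix.l2_opNorm_mul _ _) _
  have n2 : lr * ‖Uphᵀ * U‖ ≤ ‖Bh‖ * ‖Vᵀ * Vph‖ + ‖Uphᵀ * Δ * V‖ := by
    calc lr * ‖Uphᵀ * U‖ ≤ ‖(Uphᵀ * U) * A‖ := mul_lower_right _ A lr hlr0 hA
      _ = ‖Bh * (Vphᵀ * V) - Uphᵀ * (Δ * V)‖ := by rw [Matrix.mul_assoc, e2]
      _ ≤ ‖Bh * (Vphᵀ * V)‖ + ‖Uphᵀ * (Δ * V)‖ := norm_sub_le _ _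
      _ ≤ ‖Bh‖ * ‖Vᵀ * Vph‖ + ‖Uphᵀ * Δ * V‖ := by
          rw [hassoc2, ← hVphVT]
          exact add_le_add_left (Matrix.l2_opNorm_mul _ _) _
  have hpos : 0 < lr ^ 2 - ‖Bh‖ ^ 2 := by nlinarith
  have hcomb : (lr ^ 2 - ‖Bh‖ ^ 2) * ‖Uphᵀ * U‖ ≤
      ‖Bh‖ * ‖Uᵀ * Δ * Vph‖ + lr * ‖Uphᵀ * Δ * V‖ := by
    nlinarith [mul_le_mul_of_nonneg_left n2 hlr0.le, mul_le_mul_of_nonneg_left n1 hlh0]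
  have ha : ‖Uphᵀ * U‖ ≤ (‖Bh‖ * ‖Uᵀ * Δ * Vph‖ + lr * ‖Uphᵀ * Δ * V‖) / (lr ^ 2 - ‖Bh‖ ^ 2) := by
    rw [le_div_iff₀ hpos]
    linarith [hcomb]
  have hsin : ‖Upᵀ * Uh‖ ≤ ‖Uphᵀ * U‖ :=
    sin_theta U Up Uh Uph hU hUcomplete hUh hUhcomplete
  have first : ‖Upᵀ * Uh‖ ≤
      (‖Bh‖ * ‖Uᵀ * Δ * Vph‖ + lr * ‖Uphᵀ * Δ * V‖) / (lr ^ 2 - ‖Bh‖ ^ 2) :=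
    hsin.trans ha
  refine ⟨first, first.trans ?_⟩
  have hgap' : 0 < lr - ‖Bh‖ := by linarith
  rw [div_le_div_iff₀ hpos hgap']
  have hm1 : ‖Uᵀ * Δ * Vph‖ ≤ max ‖Uᵀ * Δ * Vph‖ ‖Uphᵀ * Δ * V‖ := le_max_left _ _
  have hm2 : ‖Uphᵀ * Δ * V‖ ≤ max ‖Uᵀ * Δ * Vph‖ ‖Uphᵀ * Δ * V‖ := le_max_right _ _
  have hsum : ‖Bh‖ * ‖Uᵀ * Δ * Vph‖ + lr * ‖Uphᵀ * Δ * V‖ ≤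
      (‖Bh‖ + lr) * max ‖Uᵀ * Δ * Vph‖ ‖Uphᵀ * Δ * V‖ := by
    nlinarith [mul_le_mul_of_nonneg_left hm1 hlh0, mul_le_mul_of_nonneg_left hm2 hlr0.le]
  calc (‖Bh‖ * ‖Uᵀ * Δ * Vph‖ + lr * ‖Uphᵀ * Δ * V‖) * (lr - ‖Bh‖)
      ≤ ((‖Bh‖ + lr) * max ‖Uᵀ * Δ * Vph‖ ‖Uphᵀ * Δ * V‖) * (lr - ‖Bh‖) :=
        mul_le_mul_of_nonneg_right hsum hgap'.le
    _ = max ‖Uᵀ * Δ * Vph‖ ‖Uphᵀ * Δ * V‖ * (lr ^ 2 - ‖Bh‖ ^ 2) := by ring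
end

section
/- Let m ≥ 8 be an integer and let Ω = {0,1}^m be the set of binary sequences of length m. Then there exists a subset {ω^{(0)}, ω^{(1)}, …, ω^{(N)}} of Ω of N + 1 distinct elements such that ω^{(0)} = (0, …, 0), the Hamming distance satisfies ρ_H(ω^{(i)}, ω^{(j)}) ≥ m/8 for all 0 ≤ i < j ≤ N, and N ≥ 2^{m/8}. (Lemma B.11 of the paper: the Varshamov–Gilbert bound.) -/
open Finset in
lemma vg_key : ∀ m : ℕ, 8 ≤ m →
    2 ^ ((m + 7) / 8) * ((m + 7) / 8) * 8 ^ m < 2 ^ m * 7 ^ (m - (m + 7) / 8 + 1) := by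
  intro m
  induction m using Nat.strong_induction_on with
  | _ m ih =>
    intro hm
    by_cases h16 : m < 16
    · interval_cases m <;> norm_num
    · push_neg at h16
      obtain ⟨n, rfl⟩ : ∃ n, m = n + 8 := ⟨m - 8, by omega⟩
      have h8 : 8 ≤ n := by omega
      have key := ih n (by omega) h8
      have hd : (n + 8 + 7) / 8 = (n + 7) / 8 + 1 := by omega
      have hdle : (n + 7) / 8 ≤ n := by omega
      have hsub : n + 8 - ((n + 7) / 8 + 1) + 1 = (n - (n + 7) / 8 + 1) + 7 := by omega
      rw [hd, hsub]
      set d := (n + 7) / 8 with hdd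
      have hd1 : 1 ≤ d := by omega
      calc 2 ^ (d + 1) * (d + 1) * 8 ^ (n + 8)
          ≤ 2 ^ (d+1) * (2 * d) * 8 ^ (n + 8) := by gcongr; omega
        _ = 2 ^ 26 * (2 ^ d * d * 8 ^ n) := by ring
        _ < 2 ^ 26 * (2 ^ n * 7 ^ (n - d + 1)) := by gcongr
        _ ≤ (2 ^ 8 * 7 ^ 7) * (2 ^ n * 7 ^ (n - d + 1)) := by
            have : (2:ℕ) ^ 26 ≤ 2 ^ 8 * 7 ^ 7 := by norm_num
            exact Nat.mul_le_mul_right _ this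
        _ = 2 ^ (n + 8) * 7 ^ (n - d + 1 + 7) := by ring

lemma vg_card_small (m d : ℕ) :
    (Finset.univ.filter fun A : Finset (Fin m) => A.card < d).card
      = ∑ i ∈ Finset.range d, m.choose i := by
  have : (Finset.univ.filter fun A : Finset (Fin m) => A.card < d)
      = (Finset.range d).biUnion (fun i => Finset.powersetCard i Finset.univ) := by
    ext A
    simp [Finset.mem_powersetCard_univ]
  rw [this, Finset.card_biUnion]
  · refine Finset.sum_congr rfl fun i _ => ?_
    simp [Finset.card_powersetCard]
  · intro i _ j _ hij
    simp only [Finset.disjoint_left, Finset.mem_powersetCard_univ]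
    rintro A rfl h
    exact hij (h ▸ rfl)

lemma vg_ball (m d : ℕ) (x : Fin m → Bool) :
    (Finset.univ.filter fun ω : Fin m → Bool =>
        (Finset.univ.filter fun k => x k ≠ ω k).card < d).card
      ≤ ∑ i ∈ Finset.range d, m.choose i := by
  rw [← vg_card_small m d]
  apply Finset.card_le_card_of_injOn (fun ω => Finset.univ.filter fun k => x k ≠ ω k)
  · intro ω hω
    simp only [Finset.mem_coe, Finset.mem_filter, Finset.mem_univ, true_and] at hω ⊢
    exact hω
  · intro a _ b _ hab
    funext k
    have := Finset.ext_iff.mp hab k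
    simp only [Finset.mem_filter, Finset.mem_univ, true_and] at this
    revert this
    cases x k <;> cases a k <;> cases b k <;> simp


/-- **Lemma B.11** (Varshamov–Gilbert bound): for `m ≥ 8` there exist `N + 1` distinct
binary sequences `ω^{(0)}, …, ω^{(N)} ∈ {0,1}^m` with `ω^{(0)} = (0, …, 0)`, pairwise
Hamming distance at least `m/8`, and `N ≥ 2^{m/8}`. -/
theorem stmt_16 (m : ℕ) (hm : 8 ≤ m) :
    ∃ (N : ℕ) (ω : Fin (N + 1) → Fin m → Bool),
      Function.Injective ω ∧
      ω 0 = (fun _ => false) ∧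
      (∀ i j : Fin (N + 1), i ≠ j →
        (m : ℝ) / 8 ≤ (Finset.univ.filter fun k => ω i k ≠ ω j k).card) ∧
      (2 : ℝ) ^ ((m : ℝ) / 8) ≤ N := by
  classical
  set d := (m + 7) / 8 with hdd
  have hd1 : 1 ≤ d := by omega
  have hdm : d ≤ m := by omega
  have h8d : m ≤ 8 * d := by omega
  set z : Fin m → Bool := fun _ => false with hz
  set dist : (Fin m → Bool) → (Fin m → Bool) → ℕ :=
    fun x y => (Finset.univ.filter fun k => x k ≠ y k).card with hdist
  have dist_comm : ∀ x y, dist x y = dist y x := by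
    intro x y
    simp only [hdist]
    congr 1
    ext k
    simp [ne_comm]
  have dist_self : ∀ x, dist x x = 0 := by
    intro x; simp [hdist]
  set P : Finset (Fin m → Bool) → Prop :=
    fun S => z ∈ S ∧ ∀ x ∈ S, ∀ y ∈ S, x ≠ y → d ≤ dist x y with hP
  -- maximal good set
  obtain ⟨S, hSF, hSmax⟩ := Finset.exists_max_image
    (Finset.univ.filter fun S => P S) Finset.card
    ⟨{z}, by simp [hP]⟩
  simp only [Finset.mem_filter, Finset.mem_univ, true_and] at hSF
  obtain ⟨hzS, hSdist⟩ := hSF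
  -- covering property
  have cover : ∀ ω : Fin m → Bool, ∃ x ∈ S, dist x ω < d := by
    intro ω
    by_contra hc
    push_neg at hc
    have hωS : ω ∉ S := by
      intro h
      have := hc ω h
      rw [dist_self] at this
      omega
    have hins : P (insert ω S) := by
      refine ⟨Finset.mem_insert_of_mem hzS, ?_⟩
      intro x hx y hy hxy
      rw [Finset.mem_insert] at hx hy
      rcases hx with hx | hx
      · rcases hy with hy | hy
        · exact absurd (hx.trans hy.symm) hxy
        · subst hx; rw [dist_comm]; exact hc y hy
      · rcases hy with hy | hy
        · subst hy; exact hc x hx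
        · exact hSdist x hx y hy hxy
    have := hSmax (insert ω S) (Finset.mem_filter.mpr ⟨Finset.mem_univ _, hins⟩)
    rw [Finset.card_insert_of_notMem hωS] at this
    omega
  -- counting
  set V := ∑ i ∈ Finset.range d, m.choose i with hV
  have hcount : 2 ^ m ≤ S.card * V := by
    have hcov : (Finset.univ : Finset (Fin m → Bool))
        ⊆ S.biUnion (fun x => Finset.univ.filter fun ω => dist x ω < d) := by
      intro ω _
      obtain ⟨x, hx, hlt⟩ := cover ω
      exact Finset.mem_biUnion.mpr ⟨x, hx, by simp [hlt]⟩
    calc 2 ^ m = (Finset.univ : Finset (Fin m → Bool)).card := by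
          simp [Finset.card_univ]
      _ ≤ (S.biUnion (fun x => Finset.univ.filter fun ω => dist x ω < d)).card :=
          Finset.card_le_card hcov
      _ ≤ ∑ x ∈ S, (Finset.univ.filter fun ω => dist x ω < d).card :=
          Finset.card_biUnion_le
      _ ≤ ∑ _x ∈ S, V := Finset.sum_le_sum fun x _ => vg_ball m d x
      _ = S.card * V := by rw [Finset.sum_const, smul_eq_mul]
  -- numeric bound : 2^d * V < 2^m
  have hVbound : V * 7 ^ (m - d + 1) ≤ d * 8 ^ m := by
    calc V * 7 ^ (m - d + 1) = ∑ i ∈ Finset.range d, m.choose i * 7 ^ (m - d + 1) := by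
          rw [hV, Finset.sum_mul]
      _ ≤ ∑ i ∈ Finset.range d, 8 ^ m := by
          refine Finset.sum_le_sum fun i hi => ?_
          have hi' : i < d := Finset.mem_range.mp hi
          calc m.choose i * 7 ^ (m - d + 1) ≤ m.choose i * 7 ^ (m - i) := by
                gcongr <;> omega
            _ ≤ 8 ^ m := by
                have : (1 + 7 : ℕ) ^ m = ∑ j ∈ Finset.range (m + 1),
                    1 ^ j * 7 ^ (m - j) * m.choose j := add_pow 1 7 m
                rw [show (8:ℕ) = 1 + 7 by norm_num, this]
                calc m.choose i * 7 ^ (m - i) = 1 ^ i * 7 ^ (m - i) * m.choose i := by ring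
                  _ ≤ _ := Finset.single_le_sum (f := fun j => 1 ^ j * 7 ^ (m - j) * m.choose j)
                      (fun j _ => Nat.zero_le _) (Finset.mem_range.mpr (by omega))
      _ = d * 8 ^ m := by rw [Finset.sum_const, Finset.card_range, smul_eq_mul]
  have hnum : 2 ^ d * V < 2 ^ m := by
    have h1 : 2 ^ d * V * 7 ^ (m - d + 1) < 2 ^ m * 7 ^ (m - d + 1) := by
      calc 2 ^ d * V * 7 ^ (m - d + 1) = 2 ^ d * (V * 7 ^ (m - d + 1)) := by ring
        _ ≤ 2 ^ d * (d * 8 ^ m) := by gcongr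
        _ = 2 ^ d * d * 8 ^ m := by ring
        _ < 2 ^ m * 7 ^ (m - d + 1) := vg_key m hm
    exact Nat.lt_of_mul_lt_mul_right h1
  have hSbig : 2 ^ d < S.card := by
    have : 2 ^ d * V < S.card * V := lt_of_lt_of_le hnum hcount
    exact Nat.lt_of_mul_lt_mul_right this
  -- build the family
  have hSpos : 1 ≤ S.card := Finset.card_pos.mpr ⟨z, hzS⟩
  set N := S.card - 1 with hN
  have hScard : S.card = N + 1 := by omega
  have hNge : 2 ^ d ≤ N := by
    rw [hScard] at hSbig; exact Nat.lt_succ_iff.mp hSbig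
  set S' := S.erase z with hS'
  have hS'card : S'.card = N := by
    rw [hS', Finset.card_erase_of_mem hzS, hScard]
    omega
  set e := S'.equivFin with he
  set g : Fin N → Fin m → Bool := fun j => (e.symm (Fin.cast hS'card.symm j) : Fin m → Bool)
    with hg
  have hgS' : ∀ j, g j ∈ S' := fun j => (e.symm _).2
  have hgS : ∀ j, g j ∈ S := fun j => Finset.mem_of_mem_erase (hgS' j)
  have hgz : ∀ j, g j ≠ z := fun j => Finset.ne_of_mem_erase (hgS' j)
  have hginj : Function.Injective g := by
    intro a b hab
    have : e.symm (Fin.cast hS'card.symm a) = e.symm (Fin.cast hS'card.symm b) :=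
      Subtype.ext hab
    have := e.symm.injective this
    exact Fin.cast_injective _ this
  have hinj : Function.Injective (Fin.cons z g : Fin (N + 1) → Fin m → Bool) := by
    rw [Fin.cons_injective_iff]
    refine ⟨?_, hginj⟩
    rintro ⟨j, hj⟩
    exact hgz j hj
  have hmem : ∀ k : Fin (N + 1), (Fin.cons z g : Fin (N + 1) → Fin m → Bool) k ∈ S := by
    intro k
    refine Fin.cases ?_ ?_ k
    · rw [Fin.cons_zero]; exact hzS
    · intro a; rw [Fin.cons_succ]; exact hgS a
  have hd8 : (m : ℝ) / 8 ≤ (d : ℝ) := by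
    rw [div_le_iff₀ (by norm_num)]
    calc (m : ℝ) ≤ ((8 * d : ℕ) : ℝ) := Nat.cast_le.mpr h8d
      _ = (d : ℝ) * 8 := by push_cast; ring
  refine ⟨N, Fin.cons z g, hinj, Fin.cons_zero _ _, ?_, ?_⟩
  · intro i j hij
    have hne : (Fin.cons z g : Fin (N + 1) → Fin m → Bool) i ≠ (Fin.cons z g : Fin (N + 1) → Fin m → Bool) j :=
      fun h => hij (hinj h)
    have hd' : d ≤ dist ((Fin.cons z g : Fin (N + 1) → Fin m → Bool) i)
        ((Fin.cons z g : Fin (N + 1) → Fin m → Bool) j) :=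
      hSdist _ (hmem i) _ (hmem j) hne
    calc (m : ℝ) / 8 ≤ (d : ℝ) := hd8
      _ ≤ _ := by exact_mod_cast hd'
  · have h1 : (2 : ℝ) ^ ((m : ℝ) / 8) ≤ (2 : ℝ) ^ (d : ℝ) :=
      Real.rpow_le_rpow_of_exponent_le (by norm_num) hd8
    calc (2 : ℝ) ^ ((m : ℝ) / 8) ≤ (2 : ℝ) ^ (d : ℝ) := h1
      _ = ((2 ^ d : ℕ) : ℝ) := by rw [Real.rpow_natCast]; push_cast; ring
      _ ≤ (N : ℝ) := Nat.cast_le.mpr hNge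
end
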